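/- Let U be an infinite set of vertices in a connected countable graph G. Then G contains either a U-star (a subdivision of the infinite star K_{1,ω} all of whose leaves lie in U) or a U-comb (the union of a ray R with infinitely many pairwise disjoint, possibly trivial, U–R paths). -/

import Mathlib

namespace StarCombAux

open SimpleGraph

/-- distance to the root -/
noncomputable def d {α : Type} (G : SimpleGraph α) (v0 v : α) : ℕ := G.dist v0 v

open Classical in
/-- the parent function: a neighbour closer to the root. -/
noncomputable def par {α : Type} (G : SimpleGraph α) (v0 : α) (v : α) : α :=
  if h : ∃ w, G.Adj v w ∧ G.dist v0 w + 1 = G.dist v0 v then h.choose else v0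

variable {α : Type} {G : SimpleGraph α} {v0 : α}

lemma par_spec (hG : G.Connected) {v : α} (hv : v ≠ v0) :
    G.Adj v (par G v0 v) ∧ d G v0 (par G v0 v) + 1 = d G v0 v := by
  have hex : ∃ w, G.Adj v w ∧ G.dist v0 w + 1 = G.dist v0 v := by
    obtain ⟨p, hp⟩ := hG.exists_walk_length_eq_dist v v0
    cases p with
    | nil => exact absurd rfl hv
    | cons h q =>
      rename_i w
      refine ⟨w, h, le_antisymm ?_ ?_⟩
      · have h1 : G.dist v0 w ≤ q.length := by
          rw [SimpleGraph.dist_comm]; exact SimpleGraph.dist_le q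
        have h2 : q.length + 1 = G.dist v0 v := by
          rw [SimpleGraph.dist_comm]
          simpa using hp
        omega
      · have := hG.dist_triangle (u := v0) (v := w) (w := v)
        have hadj : G.dist w v = 1 := SimpleGraph.dist_eq_one_iff_adj.mpr h.symm
        omega
  rw [par, dif_pos hex]
  exact hex.choose_spec

lemma par_root : par G v0 v0 = v0 := by
  rw [par, dif_neg]
  rintro ⟨w, -, hw⟩
  simp [SimpleGraph.dist_self] at hw

lemma d_root : d G v0 v0 = 0 := SimpleGraph.dist_self

lemma d_eq_zero (hG : G.Connected) {v : α} (h : d G v0 v = 0) : v = v0 :=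
  ((hG.dist_eq_zero_iff).mp h).symm

lemma d_par (hG : G.Connected) (v : α) : d G v0 (par G v0 v) = d G v0 v - 1 := by
  by_cases hv : v = v0
  · subst hv; rw [par_root, d_root]
  · have := (par_spec hG hv).2; omega

lemma d_iter (hG : G.Connected) (k : ℕ) (v : α) :
    d G v0 ((par G v0)^[k] v) = d G v0 v - k := by
  induction k with
  | zero => simp
  | succ k ih =>
    rw [Function.iterate_succ_apply', d_par hG, ih]; omega

lemma iter_root (hG : G.Connected) (v : α) : (par G v0)^[d G v0 v] v = v0 := by
  apply d_eq_zero hG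
  rw [d_iter hG]; omega

/-- `x` is an ancestor of `u` (possibly `x = u`). -/
def Anc {α : Type} (G : SimpleGraph α) (v0 : α) (x u : α) : Prop :=
  ∃ k, (par G v0)^[k] u = x

lemma anc_refl (u : α) : Anc G v0 u u := ⟨0, rfl⟩

lemma anc_d_le (hG : G.Connected) {x u : α} (h : Anc G v0 x u) :
    d G v0 x ≤ d G v0 u := by
  obtain ⟨k, rfl⟩ := h
  rw [d_iter hG]; omega

lemma anc_canon (hG : G.Connected) {x u : α} (h : Anc G v0 x u) :
    (par G v0)^[d G v0 u - d G v0 x] u = x := by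
  obtain ⟨k, rfl⟩ := h
  by_cases hk : k ≤ d G v0 u
  · congr 1
    rw [d_iter hG]; omega
  · have h0 : d G v0 ((par G v0)^[k] u) = 0 := by rw [d_iter hG]; omega
    rw [d_eq_zero hG h0, d_root, Nat.sub_zero, iter_root hG]

lemma anc_unique (hG : G.Connected) {a b u : α} (ha : Anc G v0 a u) (hb : Anc G v0 b u)
    (hd : d G v0 a = d G v0 b) : a = b := by
  rw [← anc_canon hG ha, ← anc_canon hG hb, hd]

lemma anc_trans_of_le (hG : G.Connected) {a b u : α} (ha : Anc G v0 a u) (hb : Anc G v0 b u)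
    (hd : d G v0 a ≤ d G v0 b) : Anc G v0 a b := by
  have hau := anc_d_le hG ha
  have hbu := anc_d_le hG hb
  have h1 := anc_canon hG ha
  have h2 := anc_canon hG hb
  refine ⟨d G v0 b - d G v0 a, ?_⟩
  have h3 : (par G v0)^[d G v0 b - d G v0 a] ((par G v0)^[d G v0 u - d G v0 b] u) = a := by
    rw [← Function.iterate_add_apply]
    have he : d G v0 b - d G v0 a + (d G v0 u - d G v0 b) = d G v0 u - d G v0 a := by omega
    rw [he]; exact h1
  rw [h2] at h3
  exact h3

lemma anc_par {x u : α} (h : Anc G v0 x u) : Anc G v0 (par G v0 x) u := by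
  obtain ⟨k, rfl⟩ := h
  exact ⟨k + 1, (Function.iterate_succ_apply' _ _ _)⟩

lemma anc_of_anc {x y u : α} (hxy : Anc G v0 x y) (hyu : Anc G v0 y u) : Anc G v0 x u := by
  obtain ⟨k, rfl⟩ := hxy
  obtain ⟨m, rfl⟩ := hyu
  exact ⟨k + m, (Function.iterate_add_apply _ _ _ _)⟩

lemma anc_root (hG : G.Connected) (u : α) : Anc G v0 v0 u :=
  ⟨d G v0 u, iter_root hG u⟩

lemma adj_iter (hG : G.Connected) (k : ℕ) (u : α) (hk : k + 1 ≤ d G v0 u) :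
    G.Adj ((par G v0)^[k+1] u) ((par G v0)^[k] u) := by
  rw [Function.iterate_succ_apply']
  have hne : (par G v0)^[k] u ≠ v0 := by
    intro h
    have := d_iter (v0 := v0) hG k u
    rw [h, d_root] at this
    omega
  exact ((par_spec hG hne).1).symm

/-- the walk from the `k`-th ancestor of `u` back up to `u`. -/
noncomputable def walkUp (hG : G.Connected) :
    (k : ℕ) → (u : α) → k ≤ d G v0 u → G.Walk ((par G v0)^[k] u) u
  | 0, u, _ => SimpleGraph.Walk.nil
  | (k+1), u, hk => SimpleGraph.Walk.cons (adj_iter hG k u hk) (walkUp hG k u (Nat.le_of_succ_le hk))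

lemma walkUp_support (hG : G.Connected) (k : ℕ) (u : α) (hk : k ≤ d G v0 u) :
    ∀ z, z ∈ (walkUp hG k u hk).support ↔ ∃ i ≤ k, (par G v0)^[i] u = z := by
  induction k with
  | zero =>
    intro z
    simp only [walkUp, SimpleGraph.Walk.support_nil, List.mem_singleton]
    constructor
    · intro h; exact ⟨0, le_refl _, (List.mem_singleton.mp h).symm⟩
    · rintro ⟨i, hi, rfl⟩; simp [Nat.le_zero.mp hi]
  | succ k ih =>
    intro z
    simp only [walkUp, SimpleGraph.Walk.support_cons, List.mem_cons]
    rw [ih (by omega) z]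
    constructor
    · rintro (rfl | ⟨i, hi, rfl⟩)
      · exact ⟨k + 1, le_refl _, rfl⟩
      · exact ⟨i, by omega, rfl⟩
    · rintro ⟨i, hi, rfl⟩
      rcases Nat.lt_or_ge i (k+1) with h | h
      · exact Or.inr ⟨i, by omega, rfl⟩
      · have : i = k + 1 := by omega
        subst this; exact Or.inl rfl

lemma walkUp_isPath (hG : G.Connected) (k : ℕ) (u : α) (hk : k ≤ d G v0 u) :
    (walkUp hG k u hk).IsPath := by
  induction k with
  | zero => exact SimpleGraph.Walk.IsPath.nil
  | succ k ih =>
    simp only [walkUp]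
    refine SimpleGraph.Walk.IsPath.cons (ih (Nat.le_of_succ_le hk)) ?_
    rw [walkUp_support hG k u (Nat.le_of_succ_le hk)]
    rintro ⟨i, hi, hiz⟩
    have h1 := d_iter (v0 := v0) hG i u
    have h2 := d_iter (v0 := v0) hG (k+1) u
    rw [hiz] at h1
    omega

/-- the walk from an ancestor `x` of `u` up to `u`. -/
noncomputable def ancWalk (hG : G.Connected) {x u : α} (h : Anc G v0 x u) : G.Walk x u :=
  (walkUp hG (d G v0 u - d G v0 x) u (by omega)).copy (anc_canon hG h) rfl

lemma ancWalk_isPath (hG : G.Connected) {x u : α} (h : Anc G v0 x u) :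
    (ancWalk hG h).IsPath := by
  rw [ancWalk, SimpleGraph.Walk.isPath_copy]
  exact walkUp_isPath hG _ u _

lemma ancWalk_support (hG : G.Connected) {x u : α} (h : Anc G v0 x u) :
    ∀ z, z ∈ (ancWalk hG h).support ↔ Anc G v0 z u ∧ d G v0 x ≤ d G v0 z := by
  intro z
  have hxu := anc_d_le hG h
  rw [ancWalk, SimpleGraph.Walk.support_copy,
    walkUp_support hG (d G v0 u - d G v0 x) u (by omega) z]
  constructor
  · rintro ⟨i, hi, rfl⟩
    refine ⟨⟨i, rfl⟩, ?_⟩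
    rw [d_iter hG]; omega
  · rintro ⟨hz, hdz⟩
    refine ⟨d G v0 u - d G v0 z, ?_, anc_canon hG hz⟩
    have := anc_d_le hG hz
    omega

end StarCombAux



/-- A ray in `G`: a one-way infinite path, given by an injective sequence of
successively adjacent vertices. -/
def IsRay {α : Type*} (G : SimpleGraph α) (r : ℕ → α) : Prop :=
  Function.Injective r ∧ ∀ n, G.Adj (r n) (r (n + 1))

/-- The set of vertices of a walk. -/
def walkVerts {α : Type*} {G : SimpleGraph α} {a b : α} (p : G.Walk a b) : Set α :=
  {x | x ∈ p.support}

/-- A `U`-star in `G`: a subdivision of the infinite star `K_{1,ω}` all of whose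
leaves lie in `U`, i.e. a centre `c` together with infinitely many paths from `c`
to distinct vertices of `U`, any two of which meet exactly in `c`. -/
def HasUStar {α : Type*} (G : SimpleGraph α) (U : Set α) : Prop :=
  ∃ (c : α) (u : ℕ → α) (P : ∀ n, G.Walk c (u n)),
    Function.Injective u ∧ (∀ n, u n ∈ U) ∧ (∀ n, u n ≠ c) ∧
    (∀ n, (P n).IsPath) ∧
    ∀ m n, m ≠ n → walkVerts (P m) ∩ walkVerts (P n) = {c}

/-- A `U`-comb in `G`: the union of a ray `r` with infinitely many pairwise
disjoint (possibly trivial) paths from `U` to the ray, each meeting the ray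
exactly in its last vertex. -/
def HasUComb {α : Type*} (G : SimpleGraph α) (U : Set α) : Prop :=
  ∃ r : ℕ → α, IsRay G r ∧
    ∃ (a b : ℕ → α) (P : ∀ n, G.Walk (a n) (b n)),
      (∀ n, a n ∈ U) ∧ (∀ n, b n ∈ Set.range r) ∧ (∀ n, (P n).IsPath) ∧
      (∀ n, walkVerts (P n) ∩ Set.range r = {b n}) ∧
      ∀ m n, m ≠ n → Disjoint (walkVerts (P m)) (walkVerts (P n))

namespace StarCombAux

lemma exists_seq {β : Type} (P : β → Prop) (R : β → β → Prop) (b0 : β) (h0 : P b0)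
    (hstep : ∀ b, P b → ∃ c, P c ∧ R b c) :
    ∃ g : ℕ → β, g 0 = b0 ∧ ∀ n, P (g n) ∧ R (g n) (g (n + 1)) := by
  classical
  choose f hfP hfR using hstep
  let g : ℕ → β := fun n => Nat.rec b0 (fun _ x => if hx : P x then f x hx else x) n
  have hP : ∀ n, P (g n) := by
    intro n
    induction n with
    | zero => exact h0
    | succ n ih =>
      show P (if hx : P (g n) then f (g n) hx else g n)
      rw [dif_pos ih]
      exact hfP _ ih
  refine ⟨g, rfl, fun n => ⟨hP n, ?_⟩⟩
  have hg : g (n + 1) = f (g n) (hP n) := by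
    show (if hx : P (g n) then f (g n) hx else g n) = _
    rw [dif_pos (hP n)]
  rw [hg]
  exact hfR _ _

end StarCombAux

open StarCombAux

/-- **Star–comb lemma.** If `U` is an infinite set of vertices in a connected
countable graph `G`, then `G` contains a `U`-star or a `U`-comb. -/
theorem star_comb_lemma {α : Type} [Countable α] (G : SimpleGraph α) (hG : G.Connected)
    (U : Set α) (hU : U.Infinite) :
    HasUStar G U ∨ HasUComb G U := by
  classical
  obtain ⟨v0⟩ := hG.nonempty
  set D : α → Set α := fun x => {u | u ∈ U ∧ Anc G v0 x u} with hD
  set Ch : α → Set α := fun x =>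
    {y | par G v0 y = x ∧ y ≠ v0 ∧ ∃ u ∈ U, Anc G v0 y u} with hCh
  by_cases hcase : ∃ x, (Ch x).Infinite
  · -- ================= STAR CASE =================
    left
    obtain ⟨x, hx⟩ := hcase
    let e : ℕ ↪ ↥(Ch x) := Set.Infinite.natEmbedding _ hx
    set y : ℕ → α := fun n => (e n : α) with hy
    have hyinj : Function.Injective y := fun m n h =>
      e.injective (Subtype.ext h)
    have hyCh : ∀ n, y n ∈ Ch x := fun n => (e n).2
    choose u hu hanc using fun n => (hyCh n).2.2
    have hypar : ∀ n, par G v0 (y n) = x := fun n => (hyCh n).1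
    have hyne : ∀ n, y n ≠ v0 := fun n => (hyCh n).2.1
    have hyd : ∀ n, d G v0 (y n) = d G v0 x + 1 := by
      intro n
      have := (par_spec hG (hyne n)).2
      rw [hypar n] at this
      omega
    have hxy : ∀ n, Anc G v0 x (y n) := fun n =>
      show ∃ k, (par G v0)^[k] (y n) = x from ⟨1, by simp [hypar n]⟩
    have hxu : ∀ n, Anc G v0 x (u n) := fun n => anc_of_anc (hxy n) (hanc n)
    refine ⟨x, u, fun n => ancWalk hG (hxu n), ?_, hu, ?_, ?_, ?_⟩
    · -- u injective
      intro m n h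
      apply hyinj
      have h1 : Anc G v0 (y m) (u n) := h ▸ hanc m
      exact anc_unique hG h1 (hanc n) (by rw [hyd m, hyd n])
    · -- u n ≠ x
      intro n h
      have h1 := anc_d_le hG (hanc n)
      rw [h, hyd n] at h1
      omega
    · exact fun n => ancWalk_isPath hG (hxu n)
    · -- pairwise intersections
      intro m n hmn
      ext z
      simp only [walkVerts, Set.mem_inter_iff, Set.mem_setOf_eq, Set.mem_singleton_iff,
        ancWalk_support hG]
      constructor
      · rintro ⟨⟨hzm, hdm⟩, ⟨hzn, hdn⟩⟩
        by_contra hz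
        have hdz : d G v0 x < d G v0 z := by
          rcases Nat.lt_or_ge (d G v0 x) (d G v0 z) with h | h
          · exact h
          · exact absurd (anc_unique hG hzm (hxu m) (by omega)) hz
        have h1 : Anc G v0 (y m) z :=
          anc_trans_of_le hG (hanc m) hzm (by rw [hyd m]; omega)
        have h2 : Anc G v0 (y n) z :=
          anc_trans_of_le hG (hanc n) hzn (by rw [hyd n]; omega)
        exact hmn (hyinj (anc_unique hG h1 h2 (by rw [hyd m, hyd n])))
      · rintro rfl
        exact ⟨⟨hxu m, le_refl _⟩, ⟨hxu n, le_refl _⟩⟩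
  · -- ================= COMB CASE =================
    right
    push_neg at hcase
    -- stepping lemma
    have hstep : ∀ x, (D x).Infinite → ∃ y, (D y).Infinite ∧
        (par G v0 y = x ∧ y ≠ v0) := by
      intro x hDx
      have hsub : D x \ {x} ⊆ ⋃ y ∈ Ch x, D y := by
        rintro w ⟨⟨hwU, hwanc⟩, hwx⟩
        have hwx' : w ≠ x := by simpa using hwx
        have hdlt : d G v0 x < d G v0 w := by
          rcases Nat.lt_or_ge (d G v0 x) (d G v0 w) with h | h
          · exact h
          · exact absurd (anc_unique hG hwanc (anc_refl w) (le_antisymm (anc_d_le hG hwanc) h)) hwx'.symm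
        set k := d G v0 w - d G v0 x - 1 with hk
        set yy := (par G v0)^[k] w with hyy
        have hky : k + 1 = d G v0 w - d G v0 x := by omega
        have hpar : par G v0 yy = x := by
          have hstep1 : par G v0 ((par G v0)^[k] w) = (par G v0)^[k + 1] w :=
            (Function.iterate_succ_apply' _ _ _).symm
          rw [hyy, hstep1, hky]
          exact anc_canon hG hwanc
        have hdyy : d G v0 yy = d G v0 x + 1 := by
          rw [hyy, d_iter hG]; omega
        have hyne : yy ≠ v0 := by
          intro h
          rw [h, d_root] at hdyy
          omega
        have hyanc : Anc G v0 yy w := show ∃ j, (par G v0)^[j] w = yy from ⟨k, hyy.symm⟩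
        refine Set.mem_biUnion (show yy ∈ Ch x from ⟨hpar, hyne, w, hwU, hyanc⟩) ?_
        exact ⟨hwU, hyanc⟩
      by_contra hno
      push_neg at hno
      have hfin : (⋃ y ∈ Ch x, D y).Finite := by
        refine Set.Finite.biUnion (hcase x) (fun y hy => ?_)
        rw [← Set.not_infinite]
        intro hinf
        obtain ⟨hp, hne, -⟩ := hy
        exact hne (hno y hinf hp)
      exact absurd (hDx.diff (Set.finite_singleton x)) (hfin.subset hsub).not_infinite
    -- build the ray
    have hDv0 : (D v0).Infinite := hU.mono (fun u hu => ⟨hu, anc_root hG u⟩)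
    obtain ⟨r, hr0, hr⟩ := exists_seq (fun z => (D z).Infinite)
      (fun z y => par G v0 y = z ∧ y ≠ v0) v0 hDv0 hstep
    have hrD : ∀ n, (D (r n)).Infinite := fun n => (hr n).1
    have hrpar : ∀ n, par G v0 (r (n + 1)) = r n := fun n => (hr n).2.1
    have hrne : ∀ n, r (n + 1) ≠ v0 := fun n => (hr n).2.2
    have hrd : ∀ n, d G v0 (r n) = n := by
      intro n
      induction n with
      | zero => rw [hr0]; exact d_root
      | succ n ih =>
        have := (par_spec hG (hrne n)).2
        rw [hrpar n, ih] at this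
        omega
    have hrinj : Function.Injective r := by
      intro m n h
      have := hrd m
      rw [h, hrd n] at this
      omega
    have hradj : ∀ n, G.Adj (r n) (r (n + 1)) := by
      intro n
      have := (par_spec hG (hrne n)).1
      rw [hrpar n] at this
      exact this.symm
    have hrancs : ∀ k n, Anc G v0 (r n) (r (n + k)) := by
      intro k
      induction k with
      | zero => exact fun n => anc_refl _
      | succ k ih =>
        intro n
        have h1 : Anc G v0 (r (n + k)) (r (n + k + 1)) :=
          show ∃ j, (par G v0)^[j] (r (n + k + 1)) = r (n + k) from ⟨1, by simp [hrpar]⟩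
        exact anc_of_anc (ih n) h1
    have hranc : ∀ m n, m ≤ n → Anc G v0 (r m) (r n) := by
      intro m n hmn
      have := hrancs (n - m) m
      rwa [Nat.add_sub_cancel' hmn] at this
    -- build the teeth
    have hteeth : ∃ g : ℕ → ℕ × α,
        g 0 = (0, (hrD 0).nonempty.choose) ∧
        ∀ n, ((g n).2 ∈ U ∧ Anc G v0 (r (g n).1) (g n).2) ∧
          (g (n + 1)).1 = d G v0 (g n).2 + 1 := by
      refine exists_seq (fun p : ℕ × α => p.2 ∈ U ∧ Anc G v0 (r p.1) p.2)
        (fun p q => q.1 = d G v0 p.2 + 1) (0, (hrD 0).nonempty.choose) ?_ ?_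
      · have h0 := (hrD 0).nonempty.choose_spec
        exact ⟨h0.1, h0.2⟩
      · rintro ⟨t, w⟩ ⟨hwU, hwanc⟩
        obtain ⟨w', hw'⟩ := (hrD (d G v0 w + 1)).nonempty
        exact ⟨(d G v0 w + 1, w'), ⟨hw'.1, hw'.2⟩, rfl⟩
    obtain ⟨g, hg0, hg⟩ := hteeth
    set t : ℕ → ℕ := fun n => (g n).1 with ht
    set u : ℕ → α := fun n => (g n).2 with hu
    have huU : ∀ n, u n ∈ U := fun n => (hg n).1.1
    have huanc : ∀ n, Anc G v0 (r (t n)) (u n) := fun n => (hg n).1.2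
    have htsucc : ∀ n, t (n + 1) = d G v0 (u n) + 1 := fun n => (hg n).2
    have htle : ∀ n, t n ≤ d G v0 (u n) := by
      intro n
      have := anc_d_le hG (huanc n)
      rwa [hrd (t n)] at this
    have htmono' : ∀ k n, t n ≤ t (n + k) := by
      intro k
      induction k with
      | zero => exact fun n => le_refl _
      | succ k ih =>
        intro n
        have h1 := ih n
        have h2 := htsucc (n + k)
        have h3 := htle (n + k)
        have : n + (k + 1) = (n + k) + 1 := by omega
        rw [this]
        omega
    have htmono : ∀ m n, m ≤ n → t m ≤ t n := by
      intro m n hmn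
      have := htmono' (n - m) m
      rwa [Nat.add_sub_cancel' hmn] at this
    -- last meeting point with the ray
    set M : ℕ → ℕ := fun n => Nat.findGreatest (fun k => Anc G v0 (r k) (u n)) (d G v0 (u n))
      with hM
    have hM1 : ∀ n, Anc G v0 (r (M n)) (u n) := fun n =>
      Nat.findGreatest_spec (P := fun k => Anc G v0 (r k) (u n)) (htle n) (huanc n)
    have hM2 : ∀ n, t n ≤ M n := fun n =>
      Nat.le_findGreatest (P := fun k => Anc G v0 (r k) (u n)) (htle n) (huanc n)
    have hMle : ∀ n, M n ≤ d G v0 (u n) := fun n =>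
      Nat.findGreatest_le (P := fun k => Anc G v0 (r k) (u n)) _
    have hM3 : ∀ n k, Anc G v0 (r k) (u n) → k ≤ M n := by
      intro n k hk
      by_contra hlt
      push_neg at hlt
      rcases Nat.lt_or_ge (d G v0 (u n)) k with h | h
      · have := anc_d_le hG hk
        rw [hrd k] at this
        omega
      · exact Nat.findGreatest_is_greatest (P := fun k => Anc G v0 (r k) (u n)) hlt h hk
    have hsupp : ∀ n z, z ∈ (ancWalk hG (hM1 n)).reverse.support ↔
        Anc G v0 z (u n) ∧ M n ≤ d G v0 z := by
      intro n z
      rw [SimpleGraph.Walk.support_reverse, List.mem_reverse, ancWalk_support hG,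
        hrd (M n)]
    refine ⟨r, ⟨hrinj, hradj⟩, u, fun n => r (M n),
      fun n => (ancWalk hG (hM1 n)).reverse,
      huU, fun n => ⟨M n, rfl⟩,
      fun n => by exact (ancWalk_isPath hG (hM1 n)).reverse, ?_, ?_⟩
    · -- meets ray exactly at r (M n)
      intro n
      show walkVerts ((ancWalk hG (hM1 n)).reverse) ∩ Set.range r = {r (M n)}
      ext z
      simp only [walkVerts, Set.mem_inter_iff, Set.mem_setOf_eq, Set.mem_singleton_iff,
        hsupp n, Set.mem_range]
      constructor
      · rintro ⟨⟨hzu, hdz⟩, k, rfl⟩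
        have hk := hM3 n k hzu
        rw [hrd k] at hdz
        have : k = M n := by omega
        rw [this]
      · rintro rfl
        exact ⟨⟨hM1 n, by rw [hrd (M n)]⟩, M n, rfl⟩
    · -- pairwise disjoint teeth
      have key : ∀ m n, m < n → Disjoint (walkVerts ((ancWalk hG (hM1 m)).reverse))
          (walkVerts ((ancWalk hG (hM1 n)).reverse)) := by
        intro m n hmn
        rw [Set.disjoint_left]
        intro z hzm hzn
        simp only [walkVerts, Set.mem_setOf_eq, hsupp] at hzm hzn
        have h1 : d G v0 z ≤ d G v0 (u m) := anc_d_le hG hzm.1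
        have h2 : M n ≤ d G v0 z := hzn.2
        have h3 : t (m + 1) ≤ t n := htmono (m + 1) n (by omega)
        have h4 := htsucc m
        have h5 := hM2 n
        omega
      intro m n hmn
      rcases Nat.lt_or_gt_of_ne hmn with h | h
      · exact key m n h
      · exact (key n m h).symm
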